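/- Let q be an odd prime power, d ≥ 2, and let g : F_q^d → ℂ be a d-coordinate lay function, i.e., g(m', m_d) = g(m', s m_d) for all s ∈ F_q^*. Define G_g : F_q^{d+1} → ℂ indirectly by requiring its Fourier transform to satisfy Ĝ_g(x', x_d, s) = ĝ(x', x_d s) for s ≠ 0 and Ĝ_g(x', x_d, 0) = 0. Then G_g is given explicitly by G_g(m, l) = q^{-1} g(m) Σ_{s ∈ F_q^*} χ(l s) for (m, l) ∈ F_q^d × F_q; equivalently G_g(m, l) = g(m)(q−1)/q if l = 0 and G_g(m, l) = −g(m)/q if l ≠ 0. -/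

import Mathlib

open Finset

section Aux

variable {F : Type} [Field F] [Fintype F] [DecidableEq F] (χ : AddChar F ℂ)

lemma aux_map_sum {ι : Type*} (s : Finset ι) (f : ι → F) :
    χ (∑ i ∈ s, f i) = ∏ i ∈ s, χ (f i) := by
  induction s using Finset.cons_induction with
  | empty => simp
  | cons a s ha ih => rw [Finset.sum_cons, Finset.prod_cons, AddChar.map_add_eq_mul, ih]

lemma aux_orthF (hχ : χ ≠ 1) (a : F) :
    ∑ x : F, χ (a * x) = if a = 0 then (Fintype.card F : ℂ) else 0 := by
  simp_rw [mul_comm a]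
  rw [AddChar.sum_mulShift a (AddChar.IsPrimitive.of_ne_one hχ)]
  split_ifs <;> simp

lemma aux_orthK (hχ : χ ≠ 1) (k : ℕ) (v : Fin k → F) :
    ∑ x : Fin k → F, χ (∑ i, v i * x i) = if v = 0 then (Fintype.card F : ℂ) ^ k else 0 := by
  simp_rw [aux_map_sum]
  have hpf := Finset.sum_prod_piFinset (ι := Fin k) (univ : Finset F) (fun i t => χ (v i * t))
  rw [Fintype.piFinset_univ] at hpf
  rw [hpf]
  by_cases hv : v = 0
  · simp [hv, Finset.card_univ]
  · rw [if_neg hv]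
    obtain ⟨i, hi⟩ : ∃ i, v i ≠ 0 := by
      by_contra h; push_neg at h; exact hv (funext h)
    exact Finset.prod_eq_zero (Finset.mem_univ i) (by rw [aux_orthF χ hχ, if_neg hi])

lemma aux_orth2 (hχ : χ ≠ 1) (k : ℕ) (v : Fin k → F) (a : F) :
    ∑ x1 : Fin k → F, ∑ x2 : F, χ ((∑ i, v i * x1 i) + a * x2) =
      if v = 0 ∧ a = 0 then (Fintype.card F : ℂ) ^ k * (Fintype.card F : ℂ) else 0 := by
  simp_rw [AddChar.map_add_eq_mul]
  rw [← Finset.sum_mul_sum, aux_orthK χ hχ, aux_orthF χ hχ]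
  by_cases hv : v = 0 <;> by_cases ha : a = 0 <;> simp [hv, ha]

lemma aux_orth3 (hχ : χ ≠ 1) (k : ℕ) (v : Fin k → F) (a b : F) :
    ∑ x1 : Fin k → F, ∑ x2 : F, ∑ x3 : F, χ ((∑ i, v i * x1 i) + a * x2 + b * x3) =
      if v = 0 ∧ a = 0 ∧ b = 0 then
        (Fintype.card F : ℂ) ^ k * (Fintype.card F : ℂ) * (Fintype.card F : ℂ) else 0 := by
  have step : ∀ x1 : Fin k → F, ∀ x2 : F,
      ∑ x3 : F, χ ((∑ i, v i * x1 i) + a * x2 + b * x3) =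
        χ ((∑ i, v i * x1 i) + a * x2) * ∑ x3 : F, χ (b * x3) := by
    intro x1 x2
    rw [Finset.mul_sum]
    exact Finset.sum_congr rfl fun x3 _ => by rw [← AddChar.map_add_eq_mul]
  simp_rw [step, ← Finset.sum_mul]
  rw [aux_orth2 χ hχ, aux_orthF χ hχ]
  by_cases hv : v = 0 <;> by_cases ha : a = 0 <;> by_cases hb : b = 0 <;>
    simp [hv, ha, hb, and_assoc]

lemma aux_split (χ : AddChar F ℂ) {a b c : F} (h : a + b = c) (z : ℂ) :
    χ c * z = χ a * (χ b * z) := by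
  rw [← h, AddChar.map_add_eq_mul, mul_assoc]

lemma aux_sum_comm3 {α β γ : Type*} [Fintype α] [Fintype β] [Fintype γ] (f : α → β → γ → ℂ) :
    ∑ a : α, ∑ b : β, ∑ c : γ, f a b c = ∑ c : γ, ∑ a : α, ∑ b : β, f a b c :=
  (Finset.sum_congr rfl fun _ _ => Finset.sum_comm).trans Finset.sum_comm

lemma aux_sum_comm4 {α β γ δ : Type*} [Fintype α] [Fintype β] [Fintype γ] [Fintype δ]
    (f : α → β → γ → δ → ℂ) :
    ∑ a : α, ∑ b : β, ∑ c : γ, ∑ e : δ, f a b c e = ∑ e : δ, ∑ a : α, ∑ b : β, ∑ c : γ, f a b c e :=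
  (Finset.sum_congr rfl fun a _ => aux_sum_comm3 (f a)).trans Finset.sum_comm

end Aux

theorem lifted_function_explicit_form
    (F : Type) [Field F] [Fintype F] [DecidableEq F]
    (hchar : ringChar F ≠ 2)
    (d : ℕ) (hd2 : 2 ≤ d)
    (χ : AddChar F ℂ) (hχ : χ ≠ 1)
    (g : ((Fin (d - 1) → F) × F) → ℂ)
    (hlay : ∀ (m' : Fin (d - 1) → F) (md s : F), s ≠ 0 → g (m', md) = g (m', s * md))
    (G : ((Fin (d - 1) → F) × F × F) → ℂ)
    (hG : ∀ (x' : Fin (d - 1) → F) (xd s : F),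
      (∑ m : (Fin (d - 1) → F) × F × F,
          χ (-(∑ i, m.1 i * x' i + m.2.1 * xd + m.2.2 * s)) * G m) =
        if s ≠ 0 then
          ∑ m : (Fin (d - 1) → F) × F,
            χ (-(∑ i, m.1 i * x' i + m.2 * (xd * s))) * g m
        else 0) :
    ∀ (m : (Fin (d - 1) → F) × F) (l : F),
      G (m.1, m.2, l) =
        (Fintype.card F : ℂ)⁻¹ * g m *
          ∑ s ∈ univ.filter (fun s : F => s ≠ 0), χ (l * s) := by
  intro m l
  obtain ⟨m1, m2⟩ := m
  set q : ℂ := (Fintype.card F : ℂ) with hqdef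
  have hq : q ≠ 0 := Nat.cast_ne_zero.mpr Fintype.card_ne_zero
  -- the key double transform
  set S : ℂ := ∑ x1 : Fin (d - 1) → F, ∑ x2 : F, ∑ x3 : F,
      χ ((∑ i, m1 i * x1 i) + m2 * x2 + l * x3) *
        (∑ n : (Fin (d - 1) → F) × F × F,
          χ (-(∑ i, n.1 i * x1 i + n.2.1 * x2 + n.2.2 * x3)) * G n) with hSdef
  have hA : S = q ^ (d-1) * q * q * G (m1, m2, l) := by
    rw [hSdef]
    simp_rw [Finset.mul_sum]
    rw [aux_sum_comm4]
    have hterm : ∀ (n : (Fin (d - 1) → F) × F × F) (x1 : Fin (d - 1) → F) (x2 x3 : F),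
        χ ((∑ i, m1 i * x1 i) + m2 * x2 + l * x3) *
            (χ (-(∑ i, n.1 i * x1 i + n.2.1 * x2 + n.2.2 * x3)) * G n) =
          χ ((∑ i, (m1 i - n.1 i) * x1 i) + (m2 - n.2.1) * x2 + (l - n.2.2) * x3) * G n := by
      intro n x1 x2 x3
      rw [← aux_split χ rfl (G n)]
      refine congrArg (fun t => χ t * G n) ?_
      simp only [sub_mul, Finset.sum_sub_distrib]
      ring
    simp_rw [hterm, ← Finset.sum_mul, aux_orth3 χ hχ]
    rw [Finset.sum_eq_single ((m1, m2, l) : (Fin (d - 1) → F) × F × F)]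
    · simp [funext_iff, hqdef]
    · intro b _ hb
      rw [if_neg, zero_mul]
      rintro ⟨h1, h2, h3⟩
      apply hb
      have e1 : b.1 = m1 := funext fun i => (sub_eq_zero.mp (congrFun h1 i)).symm
      have e2 : b.2.1 = m2 := (sub_eq_zero.mp h2).symm
      have e3 : b.2.2 = l := (sub_eq_zero.mp h3).symm
      exact Prod.ext e1 (Prod.ext e2 e3)
    · intro h
      exact absurd (Finset.mem_univ _) h
  have hB : S = q ^ (d-1) * q * g (m1, m2) *
      ∑ s ∈ univ.filter (fun s : F => s ≠ 0), χ (l * s) := by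
    rw [hSdef]
    have happ : ∀ (x1 : Fin (d - 1) → F) (x2 x3 : F),
        (∑ n : (Fin (d - 1) → F) × F × F,
            χ (-(∑ i, n.1 i * x1 i + n.2.1 * x2 + n.2.2 * x3)) * G n) =
          if x3 ≠ 0 then
            ∑ n : (Fin (d - 1) → F) × F,
              χ (-(∑ i, n.1 i * x1 i + n.2 * (x2 * x3))) * g n
          else 0 := fun x1 x2 x3 => hG x1 x2 x3
    simp_rw [happ]
    rw [aux_sum_comm3]
    rw [← Finset.sum_filter_add_sum_filter_not univ (fun s : F => s ≠ 0)]
    have h0 : ∀ x3 ∈ univ.filter (fun s : F => ¬s ≠ 0),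
        (∑ x1 : Fin (d - 1) → F, ∑ x2 : F,
            χ ((∑ i, m1 i * x1 i) + m2 * x2 + l * x3) *
              (if x3 ≠ 0 then
                ∑ n : (Fin (d - 1) → F) × F,
                  χ (-(∑ i, n.1 i * x1 i + n.2 * (x2 * x3))) * g n
              else 0)) = 0 := by
      intro x3 hx3
      simp only [Finset.mem_filter, not_not] at hx3
      obtain rfl := hx3.2
      simp
    rw [Finset.sum_eq_zero h0, add_zero]
    have main : ∀ s ∈ univ.filter (fun s : F => s ≠ 0),
        (∑ x1 : Fin (d - 1) → F, ∑ x2 : F,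
            χ ((∑ i, m1 i * x1 i) + m2 * x2 + l * s) *
              (if s ≠ 0 then
                ∑ n : (Fin (d - 1) → F) × F,
                  χ (-(∑ i, n.1 i * x1 i + n.2 * (x2 * s))) * g n
              else 0)) =
          χ (l * s) * (q ^ (d - 1) * q * g (m1, m2)) := by
      intro s hs
      rw [Finset.mem_filter] at hs
      have hs := hs.2
      simp_rw [if_pos hs, Finset.mul_sum]
      rw [aux_sum_comm3]
      have hterm : ∀ (n : (Fin (d - 1) → F) × F) (x1 : Fin (d - 1) → F) (x2 : F),
          χ ((∑ i, m1 i * x1 i) + m2 * x2 + l * s) *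
              (χ (-(∑ i, n.1 i * x1 i + n.2 * (x2 * s))) * g n) =
            χ (l * s) * (χ ((∑ i, (m1 i - n.1 i) * x1 i) + (m2 - n.2 * s) * x2) * g n) := by
        intro n x1 x2
        rw [← aux_split χ rfl (g n), ← aux_split χ rfl (g n)]
        refine congrArg (fun t => χ t * g n) ?_
        simp only [sub_mul, Finset.sum_sub_distrib]
        ring
      simp_rw [hterm, ← Finset.mul_sum]
      congr 1
      simp_rw [← Finset.sum_mul, aux_orth2 χ hχ]
      rw [Finset.sum_eq_single ((m1, m2 * s⁻¹) : (Fin (d - 1) → F) × F)]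
      · have hg : g (m1, m2 * s⁻¹) = g (m1, m2) := by
          rw [hlay m1 (m2 * s⁻¹) s hs, mul_comm s, mul_assoc, inv_mul_cancel₀ hs, mul_one]
        rw [if_pos ⟨funext fun i => sub_self _, by field_simp; ring⟩, hg]
      · intro b _ hb
        rw [if_neg, zero_mul]
        rintro ⟨h1, h2⟩
        apply hb
        have e1 : b.1 = m1 := funext fun i => (sub_eq_zero.mp (congrFun h1 i)).symm
        have e2 : b.2 = m2 * s⁻¹ :=
          (eq_mul_inv_iff_mul_eq₀ hs).mpr (sub_eq_zero.mp h2).symm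
        exact Prod.ext e1 e2
      · intro h
        exact absurd (Finset.mem_univ _) h
    rw [Finset.sum_congr rfl main, ← Finset.sum_mul]
    ring
  have key : q ^ (d-1) * q * q * G (m1, m2, l) =
      q ^ (d-1) * q * g (m1, m2) * ∑ s ∈ univ.filter (fun s : F => s ≠ 0), χ (l * s) :=
    hA ▸ hB
  have hc : q ^ (d-1) * q ≠ 0 := mul_ne_zero (pow_ne_zero _ hq) hq
  have key2 : q * G (m1, m2, l) =
      g (m1, m2) * ∑ s ∈ univ.filter (fun s : F => s ≠ 0), χ (l * s) := by
    apply mul_left_cancel₀ hc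
    linear_combination key
  field_simp
  linear_combination key2
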